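/- arXiv:1612.04032 — 2 statements merged into one kernel-verified Lean document; each statement's English description precedes it below -/
import Mathlib

section
/- Let M = M₁ ⊕ M₂ be an orthogonal decomposition of a real Hilbert space with dim M₂ = q−1 finite. Let e ∈ M₁ with ‖e‖ = 1, let ν > μ > 0, and let B_μ, B_ν be bounded linear invertible operators on M such that ν > μ‖B_ν^{-1}B_μ‖ and such that P∘B_μ^{-1}∘B_ν restricted to M₂ is an invertible operator M₂ → M₂, where P: M → M₂ is the orthogonal projection. Set S = {x ∈ M₁ : ‖x‖ = μ} and Q = {v + te : v ∈ M₂, ‖v‖ ≤ ν, t ∈ [0,ν]}. Then B_ν(∂Q) ∩ B_μ(S) = ∅. -/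
/-- disjointness part of the linking lemma: with the stated hypotheses,
`B_ν(∂Q) ∩ B_μ(S) = ∅`. -/
theorem stmt4 {M : Type*} [NormedAddCommGroup M] [InnerProductSpace ℝ M] [CompleteSpace M]
    (M₁ M₂ : Submodule ℝ M) (hperp : M₂ = M₁ᗮ) [FiniteDimensional ℝ M₂]
    (q : ℕ) (hq : Module.finrank ℝ M₂ = q - 1)
    (e : M) (he : e ∈ M₁) (hnorme : ‖e‖ = 1)
    (μ ν : ℝ) (hμ : 0 < μ) (hμν : μ < ν)
    (Bμ Bν : M ≃L[ℝ] M)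
    (hnorm : μ * ‖((Bν.symm : M →L[ℝ] M).comp (Bμ : M →L[ℝ] M))‖ < ν)
    (hinv : Function.Bijective (fun v : M₂ => Submodule.orthogonalProjectionOnto M₂ (Bμ.symm (Bν (v : M)))))
    (S : Set M) (hS : S = {x | x ∈ M₁ ∧ ‖x‖ = μ})
    (bQ : Set M)
    (hbQ : bQ = {z | ∃ v ∈ M₂, ∃ t ∈ Set.Icc (0 : ℝ) ν,
      ‖v‖ ≤ ν ∧ z = v + t • e ∧ (t = 0 ∨ t = ν ∨ ‖v‖ = ν)}) :
    (Bν '' bQ) ∩ (Bμ '' S) = ∅ := by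
  subst hS hbQ
  rw [Set.eq_empty_iff_forall_notMem]
  rintro y ⟨⟨z, hz, hy1⟩, x, ⟨hx, hxμ⟩, hy2⟩
  obtain ⟨v, hv, t, ht, hvν, rfl, hb⟩ := hz
  -- v + t • e = Bν.symm (Bμ x)
  have hw : v + t • e = Bν.symm (Bμ x) := by
    apply Bν.injective
    rw [hy1, ← hy2, Bν.apply_symm_apply]
  -- norm bound
  have hnw : ‖v + t • e‖ < ν := by
    have : Bν.symm (Bμ x) = ((Bν.symm : M →L[ℝ] M).comp (Bμ : M →L[ℝ] M)) x := rfl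
    rw [hw, this]
    calc ‖((Bν.symm : M →L[ℝ] M).comp (Bμ : M →L[ℝ] M)) x‖
        ≤ ‖((Bν.symm : M →L[ℝ] M).comp (Bμ : M →L[ℝ] M))‖ * ‖x‖ :=
          ContinuousLinearMap.le_opNorm _ _
      _ = μ * ‖((Bν.symm : M →L[ℝ] M).comp (Bμ : M →L[ℝ] M))‖ := by rw [hxμ]; ring
      _ < ν := hnorm
  -- orthogonality
  have hortho : (inner ℝ v (t • e) : ℝ) = 0 := by
    rw [real_inner_smul_right]
    have : (inner ℝ e v : ℝ) = 0 := by
      rw [hperp] at hv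
      exact hv e he
    rw [real_inner_comm] at this
    rw [this, mul_zero]
  have hsq : ‖v + t • e‖ ^ 2 = ‖v‖ ^ 2 + t ^ 2 := by
    rw [norm_add_sq_real, hortho, norm_smul, hnorme]
    have : |t| = t := abs_of_nonneg ht.1
    simp [Real.norm_eq_abs, this]
    try ring
  have hvlt : ‖v‖ < ν := by nlinarith [ht.1, norm_nonneg v, norm_nonneg (v + t • e)]
  have htlt : t < ν := by nlinarith [ht.1, norm_nonneg v, norm_nonneg (v + t • e)]
  have ht0 : t = 0 := by
    rcases hb with h | h | h
    · exact h
    · exact absurd h htlt.ne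
    · exact absurd h hvlt.ne
  subst ht0
  rw [zero_smul, add_zero] at hw
  -- x ∈ M₂ᗮ
  have hx2 : x ∈ M₂ᗮ := by
    rw [hperp]
    exact Submodule.le_orthogonal_orthogonal M₁ hx
  have hxval : Bμ.symm (Bν v) = x := by
    apply Bμ.injective
    rw [Bμ.apply_symm_apply, hw, Bν.apply_symm_apply]
  have hf : (fun w : M₂ => Submodule.orthogonalProjectionOnto M₂ (Bμ.symm (Bν (w : M)))) ⟨v, hv⟩
      = (fun w : M₂ => Submodule.orthogonalProjectionOnto M₂ (Bμ.symm (Bν (w : M)))) 0 := by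
    simp only [Submodule.coe_zero, map_zero]
    simp only [hxval]
    rw [Submodule.orthogonalProjectionOnto_apply_of_mem_orthogonal hx2]
    try simp
  have := hinv.injective hf
  have hv0 : v = 0 := by
    simpa using congrArg (Subtype.val) this
  subst hv0
  rw [map_zero, map_zero] at hxval
  rw [← hxval] at hxμ
  simp at hxμ
  exact absurd hxμ.symm hμ.ne'
end

section
/- Let M = M₁ ⊕ M₂ be an orthogonal decomposition of a real Hilbert space with dim M₂ finite, e ∈ M₁ with ‖e‖ = 1, ν > μ > 0, and B_μ, B_ν bounded linear invertible operators on M with ν > μ‖B_ν^{-1}B_μ‖ and with B₀ := P∘B_μ^{-1}∘B_ν|_{M₂}: M₂ → M₂ invertible (P the orthogonal projection onto M₂). Define ψ₀: [0,ν] × {v ∈ M₂ : ‖v‖ ≤ ν} → ℝ × M₂ by ψ₀(t,v) = (‖B_μ^{-1}B_ν(te+v)‖, P B_μ^{-1}B_ν(te+v)). Then the equation ψ₀(t,v) = (μ, 0) has the unique solution t* = μ‖B_μ^{-1}B_ν e − B_μ^{-1}B_ν B₀^{-1}(P B_μ^{-1}B_ν e)‖^{-1}, v* = −t* B₀^{-1}(P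 B_μ^{-1}B_ν e), and moreover 0 < t* < ν and ‖v*‖ < ν. -/
set_option maxHeartbeats 1000000 in
/-- explicit unique solution of `ψ₀(t,v) = (μ,0)` in the linking lemma. -/
theorem stmt5 {M : Type*} [NormedAddCommGroup M] [InnerProductSpace ℝ M] [CompleteSpace M]
    (M₁ M₂ : Submodule ℝ M) (hperp : M₂ = M₁ᗮ) [FiniteDimensional ℝ M₂]
    (e : M) (he : e ∈ M₁) (hnorme : ‖e‖ = 1)
    (μ ν : ℝ) (hμ : 0 < μ) (hμν : μ < ν)
    (Bμ Bν : M ≃L[ℝ] M)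
    (hnorm : μ * ‖((Bν.symm : M →L[ℝ] M).comp (Bμ : M →L[ℝ] M))‖ < ν)
    (B₀ B₀inv : M₂ → M₂)
    (hB₀ : ∀ v : M₂, B₀ v = M₂.orthogonalProjectionOnto (Bμ.symm (Bν (v : M))))
    (hli : ∀ v, B₀inv (B₀ v) = v) (hri : ∀ v, B₀ (B₀inv v) = v)
    (tstar : ℝ) (vstar : M₂)
    (htstar : tstar = μ / ‖Bμ.symm (Bν e) -
      Bμ.symm (Bν ((B₀inv (M₂.orthogonalProjectionOnto (Bμ.symm (Bν e))) : M₂) : M))‖)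
    (hvstar : vstar = -tstar • B₀inv (M₂.orthogonalProjectionOnto (Bμ.symm (Bν e)))) :
    (0 < tstar ∧ tstar < ν ∧ ‖(vstar : M)‖ < ν) ∧
    ∀ t ∈ Set.Icc (0 : ℝ) ν, ∀ v : M₂, ‖(v : M)‖ ≤ ν →
      ((‖Bμ.symm (Bν (t • e + (v : M)))‖ = μ ∧
        M₂.orthogonalProjectionOnto (Bμ.symm (Bν (t • e + (v : M)))) = 0) ↔
        (t = tstar ∧ v = vstar)) := by
  set P := M₂.orthogonalProjectionOnto with hPdef
  set m : M₂ := B₀inv (P (Bμ.symm (Bν e))) with hm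
  set u : M := Bμ.symm (Bν e) - Bμ.symm (Bν (m : M)) with hu
  -- inner product of e and m is zero
  have hinner : (inner ℝ e ((m : M)) : ℝ) = 0 := by
    have h2 : (m : M) ∈ M₁ᗮ := hperp ▸ m.2
    exact (Submodule.mem_orthogonal _ _).1 h2 e he
  have hnsq : ‖e - (m : M)‖ ^ 2 = 1 + ‖(m : M)‖ ^ 2 := by
    rw [@norm_sub_sq_real, hinner, hnorme]; ring
  have h1 : (1 : ℝ) ≤ ‖e - (m : M)‖ := by
    nlinarith [norm_nonneg (e - (m : M)), sq_nonneg ‖(m : M)‖]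
  have h2 : ‖(m : M)‖ ≤ ‖e - (m : M)‖ := by
    nlinarith [norm_nonneg (e - (m : M)), norm_nonneg ((m : M))]
  set K := (Bν.symm : M →L[ℝ] M).comp (Bμ : M →L[ℝ] M) with hK
  have hKu : K u = e - (m : M) := by
    simp [hK, hu, map_sub]
  have hKb : ‖e - (m : M)‖ ≤ ‖K‖ * ‖u‖ := hKu ▸ K.le_opNorm u
  have hKb1 : (1 : ℝ) ≤ ‖K‖ * ‖u‖ := h1.trans hKb
  have hKbm : ‖(m : M)‖ ≤ ‖K‖ * ‖u‖ := h2.trans hKb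
  have hupos : 0 < ‖u‖ := by
    rcases (norm_nonneg u).lt_or_eq with h | h
    · exact h
    · exfalso; nlinarith
  have htν : tstar = μ / ‖u‖ := htstar
  have htu : tstar * ‖u‖ = μ := by rw [htν]; field_simp
  have ht0 : 0 < tstar := by rw [htν]; positivity
  have htub : tstar < ν := by
    rw [htν, div_lt_iff₀ hupos]
    nlinarith
  have hvm : vstar = -tstar • m := hvstar
  have hvn : ‖(vstar : M)‖ = tstar * ‖(m : M)‖ := by
    rw [hvm]
    push_cast
    rw [norm_smul]
    simp [abs_of_pos ht0]
  have hvub : ‖(vstar : M)‖ < ν := by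
    rw [hvn]; nlinarith
  -- linearity facts
  have hB₀lin : ∀ (c : ℝ) (x : M₂), B₀ (c • x) = c • B₀ x := by
    intro c x
    rw [hB₀, hB₀]
    push_cast
    rw [map_smul, map_smul, map_smul]
  have hB₀invlin : ∀ (c : ℝ) (x : M₂), B₀inv (c • x) = c • B₀inv x := by
    intro c x
    conv_lhs => rw [← hri x]
    rw [← hB₀lin, hli]
  have hBm : B₀ m = P (Bμ.symm (Bν e)) := hri _
  have key : ∀ (t : ℝ) (v : M₂),
      P (Bμ.symm (Bν (t • e + (v : M)))) = t • P (Bμ.symm (Bν e)) + B₀ v := by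
    intro t v
    rw [map_add, map_smul, map_add, map_smul, map_add, map_smul, hB₀]
  have hAu : ∀ t : ℝ, Bμ.symm (Bν (t • e + ((-t) • (m : M)))) = t • u := by
    intro t
    rw [map_add, map_smul, map_add, map_smul, map_smul, map_smul, hu]
    module
  refine ⟨⟨ht0, htub, hvub⟩, ?_⟩
  rintro t ⟨ht0', -⟩ v -
  constructor
  · rintro ⟨hn, hp⟩
    rw [key] at hp
    have hv : v = (-t) • m := by
      have hbv : B₀ v = (-t) • P (Bμ.symm (Bν e)) := by
        rw [neg_smul]
        linear_combination (norm := module) hp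
      have := congrArg B₀inv hbv
      rwa [hli, hB₀invlin] at this
    have hvc : (v : M) = (-t) • (m : M) := by rw [hv]; push_cast; ring_nf
    rw [hvc, hAu, norm_smul, Real.norm_eq_abs, abs_of_nonneg ht0'] at hn
    have htt : t = tstar := by
      rw [htν, eq_div_iff (ne_of_gt hupos)]
      exact hn
    refine ⟨htt, ?_⟩
    rw [hv, htt, hvm]
  · rintro ⟨ht', hv'⟩
    rw [ht', hv']
    have hvc : ((vstar : M₂) : M) = (-tstar) • (m : M) := by
      rw [hvm]; push_cast; ring_nf
    constructor
    · rw [hvc, hAu, norm_smul, Real.norm_eq_abs, abs_of_pos ht0, htu]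
    · rw [hvc]
      have : ((-tstar) • (m : M)) = (((-tstar) • m : M₂) : M) := by push_cast; ring_nf
      rw [this, key, hB₀lin, hBm]
      module
end
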